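/- Let L be a complete normed field satisfying the ultrametric (nonarchimedean) triangle inequality, equipped with a ℚ_p-algebra structure whose structure map is an isometry. Let f be a nonzero formal power series with coefficients in the ring ℤ_p of p-adic integers. Then the set of x ∈ L with ‖x‖ < 1 at which f converges to zero, i.e. {x ∈ L : ‖x‖ < 1 and ∑_{n≥0} a_n x^n = 0, where a_n ∈ ℤ_p are the coefficients of f}, is finite. -/

import Mathlib

open IsUltrametricDist

private lemma my_summ {L : Type*} [NormedField L] [CompleteSpace L]
    (c : ℕ → L) (hc : ∀ n, ‖c n‖ ≤ 1) {x : L} (hx : ‖x‖ < 1) :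
    Summable fun n => c n * x ^ n := by
  refine Summable.of_norm_bounded (summable_geometric_of_lt_one (norm_nonneg x) hx) fun n => ?_
  rw [norm_mul, norm_pow]
  exact mul_le_of_le_one_left (pow_nonneg (norm_nonneg x) n) (hc n)

private lemma my_ultra_tail {L : Type*} [NormedField L] [CompleteSpace L] [IsUltrametricDist L]
    (c : ℕ → L) (hc : ∀ n, ‖c n‖ ≤ 1) {x : L} (hx : ‖x‖ < 1) :
    ‖∑' n : ℕ, c n * x ^ (n + 1)‖ ≤ ‖x‖ := by
  refine norm_tsum_le_of_forall_le_of_nonneg (norm_nonneg x) fun n => ?_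
  rw [norm_mul, norm_pow]
  calc ‖c n‖ * ‖x‖ ^ (n + 1) ≤ 1 * ‖x‖ ^ (n + 1) :=
        mul_le_mul_of_nonneg_right (hc n) (pow_nonneg (norm_nonneg x) _)
    _ = ‖x‖ ^ (n + 1) := one_mul _
    _ ≤ ‖x‖ := pow_le_of_le_one (norm_nonneg x) hx.le (Nat.succ_ne_zero n)

private lemma my_norm_add_eq {L : Type*} [NormedField L] [IsUltrametricDist L]
    {u v : L} (h : ‖v‖ < ‖u‖) : ‖u + v‖ = ‖u‖ := by
  have h1 : ‖u + v‖ ≤ ‖u‖ := (norm_add_le_max u v).trans (max_le le_rfl h.le)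
  have h2 : ‖u‖ ≤ max ‖u + v‖ ‖v‖ := by
    have he : u = (u + v) + -v := by ring
    calc ‖u‖ = ‖(u + v) + -v‖ := by rw [← he]
      _ ≤ max ‖u + v‖ ‖-v‖ := norm_add_le_max _ _
      _ = max ‖u + v‖ ‖v‖ := by rw [norm_neg]
  rcases max_cases ‖u + v‖ ‖v‖ with ⟨he, _⟩ | ⟨he, hlt⟩
  · rw [he] at h2; exact le_antisymm h1 h2
  · rw [he] at h2; linarith

private lemma strassmann_aux {L : Type*} [NormedField L] [CompleteSpace L] [IsUltrametricDist L] :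
    ∀ (N : ℕ) (c : ℕ → L), (∀ n, ‖c n‖ ≤ 1) → ‖c N‖ = 1 →
      {x : L | ‖x‖ < 1 ∧ ∑' n : ℕ, c n * x ^ n = 0}.Finite := by
  intro N
  induction N with
  | zero =>
    intro c hc hc0
    convert Set.finite_empty
    rw [Set.eq_empty_iff_forall_notMem]
    rintro x ⟨hx, hs⟩
    have hsum := my_summ c hc hx
    rw [Summable.tsum_eq_zero_add hsum] at hs
    simp only [pow_zero, mul_one] at hs
    have h0 : c 0 = -∑' n : ℕ, c (n + 1) * x ^ (n + 1) := by linear_combination hs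
    have := my_ultra_tail (fun n => c (n + 1)) (fun n => hc (n + 1)) hx
    rw [← norm_neg, ← h0, hc0] at this
    exact absurd (this.trans_lt hx) (lt_irrefl 1)
  | succ N IH =>
    intro c hc hcN
    by_cases hne : {x : L | ‖x‖ < 1 ∧ ∑' n : ℕ, c n * x ^ n = 0}.Nonempty
    swap
    · rw [Set.not_nonempty_iff_eq_empty] at hne
      rw [hne]; exact Set.finite_empty
    obtain ⟨x0, hx0, hfx0⟩ := hne
    set b : ℕ → L := fun n => ∑' k : ℕ, c (n + k + 1) * x0 ^ k with hbdef
    have hbsum : ∀ n, Summable fun k : ℕ => c (n + k + 1) * x0 ^ k :=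
      fun n => my_summ (fun k => c (n + k + 1)) (fun k => hc _) hx0
    have hb1 : ∀ n, ‖b n‖ ≤ 1 := by
      intro n
      refine norm_tsum_le_of_forall_le_of_nonneg zero_le_one fun k => ?_
      rw [norm_mul, norm_pow]
      exact mul_le_one₀ (hc _) (pow_nonneg (norm_nonneg _) _)
        (pow_le_one₀ (norm_nonneg _) hx0.le)
    have hbN : ‖b N‖ = 1 := by
      have hsplit : b N = c (N + 1) + ∑' k : ℕ, c (N + (k + 1) + 1) * x0 ^ (k + 1) := by
        have hrfl : b N = ∑' k : ℕ, c (N + k + 1) * x0 ^ k := rfl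
        rw [hrfl, Summable.tsum_eq_zero_add (hbsum N)]
        simp
      have htail : ‖∑' k : ℕ, c (N + (k + 1) + 1) * x0 ^ (k + 1)‖ ≤ ‖x0‖ := by
        have := my_ultra_tail (fun k => c (N + (k + 1) + 1)) (fun k => hc _) hx0
        -- this : ‖∑' k, c (N + (k+1) + 1) * x0 ^ (k+1)‖ ≤ ‖x0‖
        exact this
      have hclt : ‖∑' k : ℕ, c (N + (k + 1) + 1) * x0 ^ (k + 1)‖ < 1 := htail.trans_lt hx0
      have hcN1 : ‖c (N + 1)‖ = 1 := hcN
      rw [hsplit, my_norm_add_eq (by rw [hcN1]; exact hclt)]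
      exact hcN1
    have hfactor : ∀ x : L, ‖x‖ < 1 →
        (∑' n : ℕ, c n * x ^ n) = (x - x0) * ∑' n : ℕ, b n * x ^ n := by
      intro x hx
      set T : ℕ × ℕ → L :=
        fun nm => if nm.2 < nm.1 then c nm.1 * x0 ^ (nm.1 - 1 - nm.2) * x ^ nm.2 else 0 with hT
      set G : ℕ × ℕ → L := fun ik => c (ik.1 + ik.2 + 1) * x0 ^ ik.2 * x ^ ik.1 with hG
      have hGs : Summable G := by
        refine Summable.of_norm_bounded (g := fun ik : ℕ × ℕ => ‖x‖ ^ ik.1 * ‖x0‖ ^ ik.2)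
          (Summable.mul_of_nonneg (summable_geometric_of_lt_one (norm_nonneg x) hx)
            (summable_geometric_of_lt_one (norm_nonneg x0) hx0)
            (fun i => pow_nonneg (norm_nonneg x) i) (fun k => pow_nonneg (norm_nonneg x0) k))
          fun ik => ?_
        rw [hG]
        simp only [norm_mul, norm_pow]
        calc ‖c (ik.1 + ik.2 + 1)‖ * ‖x0‖ ^ ik.2 * ‖x‖ ^ ik.1
            ≤ 1 * ‖x0‖ ^ ik.2 * ‖x‖ ^ ik.1 := by
              gcongr; exact hc _
          _ = ‖x‖ ^ ik.1 * ‖x0‖ ^ ik.2 := by ring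
      have hTj : ∀ ik : ℕ × ℕ, T (ik.1 + ik.2 + 1, ik.1) = G ik := by
        rintro ⟨i, k⟩
        simp only [hT, hG]
        rw [if_pos (by omega : i < i + k + 1)]
        have hk : i + k + 1 - 1 - i = k := by omega
        rw [hk]
      have hj : Function.Injective (fun ik : ℕ × ℕ => ((ik.1 + ik.2 + 1, ik.1) : ℕ × ℕ)) := by
        rintro ⟨a, b⟩ ⟨a', b'⟩ h
        simp only [Prod.mk.injEq] at h
        obtain ⟨h1, h2⟩ := h
        have hbb : b = b' := by omega
        simp_all
      have hTrange : ∀ nm : ℕ × ℕ,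
          nm ∉ Set.range (fun ik : ℕ × ℕ => ((ik.1 + ik.2 + 1, ik.1) : ℕ × ℕ)) → T nm = 0 := by
        rintro ⟨n, m⟩ hnm
        by_contra hT0
        rw [hT] at hT0
        simp only at hT0
        have hmn : m < n := by by_contra hmn; rw [if_neg hmn] at hT0; exact hT0 rfl
        refine hnm ⟨(m, n - 1 - m), ?_⟩
        show ((m + (n - 1 - m) + 1, m) : ℕ × ℕ) = (n, m)
        rw [Prod.mk.injEq]
        exact ⟨by omega, rfl⟩
      have hTs : Summable T := by
        rw [← Function.Injective.summable_iff hj hTrange]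
        have : (T ∘ fun ik : ℕ × ℕ => ((ik.1 + ik.2 + 1, ik.1) : ℕ × ℕ)) = G :=
          funext fun ik => hTj ik
        rw [this]
        exact hGs
      have hTG : ∑' nm : ℕ × ℕ, T nm = ∑' ik : ℕ × ℕ, G ik := by
        refine tsum_eq_tsum_of_ne_zero_bij
          (fun ik => ((ik.1.1 + ik.1.2 + 1, ik.1.1) : ℕ × ℕ)) ?_ ?_ ?_
        · intro a b h
          exact Subtype.ext (hj h)
        · intro nm hnm
          rw [Function.mem_support] at hnm
          rcases nm with ⟨n, m⟩
          have hmn : m < n := by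
            by_contra hmn
            rw [hT] at hnm; simp only at hnm
            rw [if_neg hmn] at hnm; exact hnm rfl
          have hGne : G (m, n - 1 - m) ≠ 0 := by
            have := hTj (m, n - 1 - m)
            simp only at this
            have heq : ((m + (n - 1 - m) + 1, m) : ℕ × ℕ) = (n, m) := by
              rw [Prod.mk.injEq]; exact ⟨by omega, rfl⟩
            rw [heq] at this
            rw [← this]
            exact hnm
          refine ⟨⟨(m, n - 1 - m), hGne⟩, ?_⟩
          show ((m + (n - 1 - m) + 1, m) : ℕ × ℕ) = (n, m)
          rw [Prod.mk.injEq]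
          exact ⟨by omega, rfl⟩
        · intro x'
          exact hTj x'.1
      have h1 : ∑' nm : ℕ × ℕ, T nm
          = ∑' n : ℕ, ∑ m ∈ Finset.range n, c n * x0 ^ (n - 1 - m) * x ^ m := by
        rw [Summable.tsum_prod' hTs fun n => summable_of_ne_finset_zero
          (s := Finset.range n) (fun m hm => by
            simp only [hT]; rw [if_neg (by simpa using hm)])]
        congr 1
        funext n
        rw [tsum_eq_sum (s := Finset.range n) (fun m hm => by
            simp only [hT]; rw [if_neg (by simpa using hm)])]
        refine Finset.sum_congr rfl fun m hm => ?_
        simp only [hT]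
        rw [if_pos (Finset.mem_range.mp hm)]
      have h2 : ∑' ik : ℕ × ℕ, G ik = ∑' i : ℕ, b i * x ^ i := by
        rw [Summable.tsum_prod' hGs fun i => ?_]
        · congr 1
          funext i
          rw [hG, hbdef]
          simp only
          exact tsum_mul_right
        · rw [hG]
          simp only
          refine Summable.mul_right _ (hbsum i)
      have hsx := my_summ c hc hx
      have hsx0 := my_summ c hc hx0
      calc ∑' n : ℕ, c n * x ^ n = ∑' n : ℕ, c n * x ^ n - ∑' n : ℕ, c n * x0 ^ n := by
            rw [hfx0, sub_zero]
        _ = ∑' n : ℕ, (c n * x ^ n - c n * x0 ^ n) := (Summable.tsum_sub hsx hsx0).symm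
        _ = ∑' n : ℕ, (x - x0) * ∑ m ∈ Finset.range n, c n * x0 ^ (n - 1 - m) * x ^ m := by
            congr 1
            funext n
            rw [← mul_sub, ← geom_sum₂_mul, Finset.sum_mul, Finset.mul_sum, Finset.mul_sum]
            refine Finset.sum_congr rfl fun m _ => by ring
        _ = (x - x0) * ∑' n : ℕ, ∑ m ∈ Finset.range n, c n * x0 ^ (n - 1 - m) * x ^ m :=
            tsum_mul_left
        _ = (x - x0) * ∑' i : ℕ, b i * x ^ i := by rw [← h1, hTG, h2]
    have hsubset : {x : L | ‖x‖ < 1 ∧ ∑' n : ℕ, c n * x ^ n = 0}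
        ⊆ insert x0 {x : L | ‖x‖ < 1 ∧ ∑' n : ℕ, b n * x ^ n = 0} := by
      rintro x ⟨hx, hzero⟩
      rw [hfactor x hx, mul_eq_zero] at hzero
      rcases hzero with h | h
      · left; exact sub_eq_zero.mp h
      · right; exact ⟨hx, h⟩
    exact ((IH b hb1 hbN).insert x0).subset hsubset

theorem finite_zeroes_of_power_series (p : ℕ) [Fact p.Prime]
    (L : Type*) [NormedField L] [CompleteSpace L] [IsUltrametricDist L]
    [Algebra ℚ_[p] L] (hiso : ∀ x : ℚ_[p], ‖algebraMap ℚ_[p] L x‖ = ‖x‖)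
    (f : PowerSeries ℤ_[p]) (hf : f ≠ 0) :
    {x : L | ‖x‖ < 1 ∧
      ∑' n : ℕ, algebraMap ℚ_[p] L ((PowerSeries.coeff n f : ℤ_[p]) : ℚ_[p]) * x ^ n = 0}.Finite := by
  classical
  have hp1 : (1 : ℝ) < p := by exact_mod_cast (Fact.out : p.Prime).one_lt
  have hp0 : (0 : ℝ) < p := lt_trans one_pos hp1
  set a : ℕ → ℤ_[p] := fun n => PowerSeries.coeff n f with ha
  have hex : ∃ n, a n ≠ 0 := by
    by_contra h
    push_neg at h
    exact hf (PowerSeries.ext fun n => by simpa using h n)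
  obtain ⟨n0, hn0⟩ := hex
  have hP : ∃ k : ℕ, ∃ n, a n ≠ 0 ∧ (a n).valuation = (k : ℤ) := by
    refine ⟨(a n0).valuation, n0, hn0, ?_⟩
    rfl
  set μ : ℕ := Nat.find hP with hμ
  obtain ⟨N, hN0, hNv⟩ := Nat.find_spec hP
  have hmin : ∀ n, a n ≠ 0 → (μ : ℤ) ≤ (a n).valuation := by
    intro n hn
    have h2 : ((a n).valuation : ℤ) = ((a n).valuation : ℤ) := rfl
    have := Nat.find_min' hP ⟨n, hn, h2.symm⟩
    omega
  set c : ℕ → L := fun n => algebraMap ℚ_[p] L ((a n : ℚ_[p]) / (p : ℚ_[p]) ^ μ) with hcdef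
  have hppow : ‖(p : ℚ_[p]) ^ μ‖ = (p : ℝ) ^ (-μ : ℤ) := Padic.norm_p_pow μ
  have hppow_pos : (0 : ℝ) < (p : ℝ) ^ (-μ : ℤ) := zpow_pos hp0 _
  have hcn : ∀ n, ‖c n‖ = ‖a n‖ / (p : ℝ) ^ (-μ : ℤ) := by
    intro n
    rw [hcdef]
    simp only
    rw [hiso, norm_div, hppow, PadicInt.padic_norm_e_of_padicInt]
  have hc : ∀ n, ‖c n‖ ≤ 1 := by
    intro n
    rw [hcn n, div_le_one hppow_pos]
    rcases eq_or_ne (a n) 0 with h | h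
    · rw [h]; simpa using hppow_pos.le
    · rw [PadicInt.norm_eq_zpow_neg_valuation h]
      exact zpow_le_zpow_right₀ hp1.le (by have := hmin n h; omega)
  have hcN : ‖c N‖ = 1 := by
    rw [hcn N, PadicInt.norm_eq_zpow_neg_valuation hN0, hNv, div_self hppow_pos.ne']
  have hu : algebraMap ℚ_[p] L ((p : ℚ_[p]) ^ μ) ≠ 0 := by
    intro h
    have := hiso ((p : ℚ_[p]) ^ μ)
    rw [h, norm_zero, hppow] at this
    exact hppow_pos.ne this
  have hkey : ∀ x : L,
      ∑' n : ℕ, algebraMap ℚ_[p] L ((a n : ℤ_[p]) : ℚ_[p]) * x ^ n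
        = algebraMap ℚ_[p] L ((p : ℚ_[p]) ^ μ) * ∑' n : ℕ, c n * x ^ n := by
    intro x
    rw [← tsum_mul_left]
    congr 1
    funext n
    rw [← mul_assoc, ← map_mul]
    congr 2
    have hpne : ((p : ℚ_[p]) ^ μ) ≠ 0 :=
      pow_ne_zero μ (Nat.cast_ne_zero.mpr (Fact.out : p.Prime).ne_zero)
    field_simp
  refine (strassmann_aux N c hc hcN).subset ?_
  rintro x ⟨hx, hzero⟩
  rw [hkey x, mul_eq_zero] at hzero
  rcases hzero with h | h
  · exact absurd h hu
  · exact ⟨hx, h⟩
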